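/- Let R ∈ [0,1], T ∈ [0,1) and α, β ∈ ℝ. Define the Gaussian amplitude f : ℂ × ℂ → ℂ by f(γ,γ') = √(1−T²) · exp( −(|γ|² + |γ'|²)/2 + √R·(α·γ + β·γ') − (α² + β²)/2 + T·(√R·γ − α)·(√R·γ' − β) ). Then the function (γ,γ') ↦ |f(γ,γ')|² is integrable on ℂ × ℂ (with respect to Lebesgue measure on ℂ ≅ ℝ² in each factor) and (1/π²) ∫_ℂ ∫_ℂ |f(γ,γ')|² dγ dγ' = (1−T²)/(1−R²T²) · exp( (α² + β²)·(1 − R + R²T² − R·T²)/(R²T² − 1) − 2αβT·(R−1)²/(R²T² − 1) ). -/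

import Mathlib

open MeasureTheory

lemma gauss1D (s c : ℝ) (hs : 0 < s) :
    Integrable (fun x : ℝ => Real.exp (-s * x ^ 2 + c * x)) ∧
    ∫ x : ℝ, Real.exp (-s * x ^ 2 + c * x)
      = Real.sqrt (Real.pi / s) * Real.exp (c ^ 2 / (4 * s)) := by
  have heq : (fun x : ℝ => Real.exp (-s * x ^ 2 + c * x))
      = fun x => Real.exp (c ^ 2 / (4 * s)) * Real.exp (-s * (x - c / (2 * s)) ^ 2) := by
    funext x
    rw [← Real.exp_add]
    congr 1
    field_simp
    ring
  have h1 : Integrable (fun x : ℝ => Real.exp (-s * (x - c / (2 * s)) ^ 2)) :=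
    (integrable_exp_neg_mul_sq hs).comp_sub_right _
  constructor
  · rw [heq]; exact h1.const_mul _
  · rw [heq, integral_const_mul,
      integral_sub_right_eq_self (fun x : ℝ => Real.exp (-s * x ^ 2)) (c / (2 * s)),
      integral_gaussian]
    ring

lemma gaussC (s c d : ℝ) (hs : 0 < s) :
    Integrable (fun z : ℂ => Real.exp (-s * (z.re ^ 2 + z.im ^ 2) + c * z.re + d * z.im)) ∧
    ∫ z : ℂ, Real.exp (-s * (z.re ^ 2 + z.im ^ 2) + c * z.re + d * z.im)
      = Real.pi / s * Real.exp ((c ^ 2 + d ^ 2) / (4 * s)) := by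
  obtain ⟨h1i, h1v⟩ := gauss1D s c hs
  obtain ⟨h2i, h2v⟩ := gauss1D s d hs
  set g : ℝ × ℝ → ℝ :=
    fun p => Real.exp (-s * p.1 ^ 2 + c * p.1) * Real.exp (-s * p.2 ^ 2 + d * p.2) with hg
  have hgeq : (fun z : ℂ => Real.exp (-s * (z.re ^ 2 + z.im ^ 2) + c * z.re + d * z.im))
      = g ∘ Complex.measurableEquivRealProd := by
    funext z
    simp only [Function.comp_apply, hg, Complex.measurableEquivRealProd_apply,
      ← Real.exp_add]
    congr 1
    ring
  have hgi : Integrable g := h1i.mul_prod h2i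
  have hsq : Real.sqrt (Real.pi / s) * Real.sqrt (Real.pi / s) = Real.pi / s :=
    Real.mul_self_sqrt (div_nonneg Real.pi_pos.le hs.le)
  constructor
  · rw [hgeq]
    exact (Complex.volume_preserving_equiv_real_prod.integrable_comp_emb
      (Complex.measurableEquivRealProd.measurableEmbedding)).mpr hgi
  · rw [hgeq, Function.comp_def,
      Complex.volume_preserving_equiv_real_prod.integral_comp
        (Complex.measurableEquivRealProd.measurableEmbedding) g]
    have hiv : (∫ y : ℝ × ℝ, g y)
        = (∫ x : ℝ, Real.exp (-s * x ^ 2 + c * x)) * ∫ x : ℝ, Real.exp (-s * x ^ 2 + d * x) := by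
      rw [hg, Measure.volume_eq_prod]
      exact integral_prod_mul (fun x : ℝ => Real.exp (-s * x ^ 2 + c * x)) (fun x : ℝ => Real.exp (-s * x ^ 2 + d * x))
    rw [hiv, h1v, h2v, mul_mul_mul_comm, hsq, ← Real.exp_add]
    congr 1
    ring

/-- The joint no-click probability of the photonic DIQKD circuit: the Gaussian
amplitude `f` has square-integrable modulus on `ℂ × ℂ` and the normalized
integral of `|f|²` has the stated closed form. -/
theorem gaussian_integral_joint_noclick
    (R T α β : ℝ) (hR0 : 0 ≤ R) (hR1 : R ≤ 1) (hT0 : 0 ≤ T) (hT1 : T < 1)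
    (f : ℂ × ℂ → ℂ)
    (hf : ∀ γ γ' : ℂ, f (γ, γ') =
      (Real.sqrt (1 - T ^ 2) : ℂ) *
        Complex.exp
          (-((‖γ‖ ^ 2 + ‖γ'‖ ^ 2 : ℝ) : ℂ) / 2
            + (Real.sqrt R : ℂ) * ((α : ℂ) * γ + (β : ℂ) * γ')
            - ((α ^ 2 + β ^ 2 : ℝ) : ℂ) / 2
            + (T : ℂ) * ((Real.sqrt R : ℂ) * γ - (α : ℂ))
              * ((Real.sqrt R : ℂ) * γ' - (β : ℂ)))) :
    Integrable (fun p : ℂ × ℂ => ‖f p‖ ^ 2) ∧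
    (1 / Real.pi ^ 2) * ∫ p : ℂ × ℂ, ‖f p‖ ^ 2 =
      (1 - T ^ 2) / (1 - R ^ 2 * T ^ 2) *
        Real.exp ((α ^ 2 + β ^ 2) * (1 - R + R ^ 2 * T ^ 2 - R * T ^ 2)
            / (R ^ 2 * T ^ 2 - 1)
          - 2 * α * β * T * (R - 1) ^ 2 / (R ^ 2 * T ^ 2 - 1)) := by
  have hexp2 : ∀ x : ℝ, Real.exp x ^ 2 = Real.exp (x + x) := by
    intro x; rw [sq, ← Real.exp_add]
  have hr0 : 0 ≤ Real.sqrt R := Real.sqrt_nonneg R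
  have hrr : Real.sqrt R ^ 2 = R := Real.sq_sqrt hR0
  set r : ℝ := Real.sqrt R with hr
  set k : ℝ := T * r ^ 2 with hk
  have hT2 : (0 : ℝ) ≤ 1 - T ^ 2 := by nlinarith
  have hk1 : k < 1 := by rw [hk, hrr]; nlinarith
  have hk0 : 0 ≤ k := by rw [hk]; positivity
  have hs2 : 0 < 1 - k ^ 2 := by nlinarith [sq_nonneg k]
  set a : ℝ := 2 * r * (α - T * β) with ha
  set b : ℝ := 2 * r * (β - T * α) with hb
  set C : ℝ := (1 - T ^ 2) * Real.exp (-(α ^ 2 + β ^ 2) + 2 * T * α * β) with hC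
  -- pointwise closed form of the integrand
  have hF : ∀ p : ℂ × ℂ, (‖f p‖) ^ 2
      = C * Real.exp (-(p.1.re ^ 2 + p.1.im ^ 2) - (p.2.re ^ 2 + p.2.im ^ 2)
          + 2 * k * (p.1.re * p.2.re - p.1.im * p.2.im) + a * p.1.re + b * p.2.re) := by
    rintro ⟨γ, γ'⟩
    rw [hf, norm_mul, mul_pow, Complex.norm_exp, Complex.norm_real, Real.norm_eq_abs,
      abs_of_nonneg (Real.sqrt_nonneg _), Real.sq_sqrt hT2, hexp2, hC]
    conv_rhs => rw [mul_assoc, ← Real.exp_add]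
    congr 1
    simp only [Complex.add_re, Complex.sub_re, Complex.neg_re, Complex.mul_re,
      Complex.div_re, Complex.ofReal_re, Complex.ofReal_im, Complex.normSq_apply,
      Complex.sq_norm, Complex.re_ofNat, Complex.im_ofNat, Complex.add_im,
      Complex.sub_im, Complex.neg_im, Complex.mul_im, hk, ha, hb]
    ring
  have hfun : (fun p : ℂ × ℂ => (‖f p‖) ^ 2)
      = fun p : ℂ × ℂ => C * Real.exp (-(p.1.re ^ 2 + p.1.im ^ 2) - (p.2.re ^ 2 + p.2.im ^ 2)
          + 2 * k * (p.1.re * p.2.re - p.1.im * p.2.im) + a * p.1.re + b * p.2.re) :=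
    funext hF
  have hC0 : 0 ≤ C := by rw [hC]; positivity
  -- splitting of the exponent
  have hsplit : ∀ z w : ℂ,
      C * Real.exp (-(z.re ^ 2 + z.im ^ 2) - (w.re ^ 2 + w.im ^ 2)
          + 2 * k * (z.re * w.re - z.im * w.im) + a * z.re + b * w.re)
      = (C * Real.exp (-(z.re ^ 2 + z.im ^ 2) + a * z.re)) *
        Real.exp (-(1 : ℝ) * (w.re ^ 2 + w.im ^ 2)
          + (2 * k * z.re + b) * w.re + (-(2 * k * z.im)) * w.im) := by
    intro z w
    conv_rhs => rw [mul_assoc, ← Real.exp_add]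
    congr 2
    ring
  have hinner : ∀ z : ℂ,
      ∫ w : ℂ, C * Real.exp (-(z.re ^ 2 + z.im ^ 2) - (w.re ^ 2 + w.im ^ 2)
          + 2 * k * (z.re * w.re - z.im * w.im) + a * z.re + b * w.re)
      = (C * Real.exp (-(z.re ^ 2 + z.im ^ 2) + a * z.re)) *
        (Real.pi / 1 * Real.exp
          (((2 * k * z.re + b) ^ 2 + (-(2 * k * z.im)) ^ 2) / (4 * 1))) := by
    intro z
    simp only [hsplit z]
    rw [integral_const_mul, (gaussC 1 (2 * k * z.re + b) (-(2 * k * z.im)) one_pos).2]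
  have houter : ∀ z : ℂ,
      (C * Real.exp (-(z.re ^ 2 + z.im ^ 2) + a * z.re)) *
        (Real.pi / 1 * Real.exp
          (((2 * k * z.re + b) ^ 2 + (-(2 * k * z.im)) ^ 2) / (4 * 1)))
      = (C * Real.pi * Real.exp (b ^ 2 / 4)) *
        Real.exp (-(1 - k ^ 2) * (z.re ^ 2 + z.im ^ 2) + (a + k * b) * z.re + 0 * z.im) := by
    intro z
    simp only [div_one]
    conv_lhs => rw [mul_mul_mul_comm, ← Real.exp_add]
    conv_rhs => rw [mul_assoc, ← Real.exp_add]
    congr 1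
    ring
  have hmeas : AEStronglyMeasurable
      (fun p : ℂ × ℂ => C * Real.exp (-(p.1.re ^ 2 + p.1.im ^ 2) - (p.2.re ^ 2 + p.2.im ^ 2)
          + 2 * k * (p.1.re * p.2.re - p.1.im * p.2.im) + a * p.1.re + b * p.2.re))
      (volume : Measure (ℂ × ℂ)) := by
    apply Continuous.aestronglyMeasurable
    fun_prop
  have hpos : ∀ z w : ℂ,
      0 ≤ C * Real.exp (-(z.re ^ 2 + z.im ^ 2) - (w.re ^ 2 + w.im ^ 2)
          + 2 * k * (z.re * w.re - z.im * w.im) + a * z.re + b * w.re) := by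
    intro z w
    have := Real.exp_pos (-(z.re ^ 2 + z.im ^ 2) - (w.re ^ 2 + w.im ^ 2)
          + 2 * k * (z.re * w.re - z.im * w.im) + a * z.re + b * w.re)
    nlinarith
  have hint : Integrable
      (fun p : ℂ × ℂ => C * Real.exp (-(p.1.re ^ 2 + p.1.im ^ 2) - (p.2.re ^ 2 + p.2.im ^ 2)
          + 2 * k * (p.1.re * p.2.re - p.1.im * p.2.im) + a * p.1.re + b * p.2.re)) := by
    rw [Measure.volume_eq_prod]
    rw [integrable_prod_iff (by rw [← Measure.volume_eq_prod]; exact hmeas)]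
    constructor
    · filter_upwards with z
      simp only [hsplit z]
      exact ((gaussC 1 (2 * k * z.re + b) (-(2 * k * z.im)) one_pos).1.const_mul _)
    · have heq2 : (fun z : ℂ => ∫ w : ℂ, ‖C * Real.exp (-(z.re ^ 2 + z.im ^ 2)
          - (w.re ^ 2 + w.im ^ 2) + 2 * k * (z.re * w.re - z.im * w.im)
          + a * z.re + b * w.re)‖)
          = fun z : ℂ => (C * Real.pi * Real.exp (b ^ 2 / 4)) *
            Real.exp (-(1 - k ^ 2) * (z.re ^ 2 + z.im ^ 2) + (a + k * b) * z.re
              + 0 * z.im) := by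
        funext z
        have hnorm : ∀ w : ℂ, ‖C * Real.exp (-(z.re ^ 2 + z.im ^ 2)
            - (w.re ^ 2 + w.im ^ 2) + 2 * k * (z.re * w.re - z.im * w.im)
            + a * z.re + b * w.re)‖
            = C * Real.exp (-(z.re ^ 2 + z.im ^ 2) - (w.re ^ 2 + w.im ^ 2)
              + 2 * k * (z.re * w.re - z.im * w.im) + a * z.re + b * w.re) := by
          intro w; rw [Real.norm_eq_abs, abs_of_nonneg (hpos z w)]
        simp only [hnorm]
        rw [hinner z, houter z]
      rw [heq2]
      exact ((gaussC (1 - k ^ 2) (a + k * b) 0 hs2).1.const_mul _)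
  have hint' : Integrable
      (fun p : ℂ × ℂ => C * Real.exp (-(p.1.re ^ 2 + p.1.im ^ 2) - (p.2.re ^ 2 + p.2.im ^ 2)
          + 2 * k * (p.1.re * p.2.re - p.1.im * p.2.im) + a * p.1.re + b * p.2.re))
      ((volume : Measure ℂ).prod volume) := by
    rw [← Measure.volume_eq_prod]; exact hint
  refine ⟨by rw [hfun]; exact hint, ?_⟩
  rw [hfun, Measure.volume_eq_prod, integral_prod _ hint']
  simp only [hinner, houter]
  rw [integral_const_mul, (gaussC (1 - k ^ 2) (a + k * b) 0 hs2).2]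
  -- final arithmetic
  have h1' : (1 : ℝ) - (T * r ^ 2) ^ 2 ≠ 0 := by rw [← hk]; exact ne_of_gt hs2
  have h2' : ((r ^ 2) ^ 2 * T ^ 2 - 1 : ℝ) ≠ 0 := by
    intro h; apply h1'; linear_combination -h
  have hexp : Real.exp (-(α ^ 2 + β ^ 2) + 2 * T * α * β) * (Real.exp (b ^ 2 / 4) *
      Real.exp (((a + k * b) ^ 2 + 0 ^ 2) / (4 * (1 - k ^ 2))))
      = Real.exp ((α ^ 2 + β ^ 2) * (1 - r ^ 2 + (r ^ 2) ^ 2 * T ^ 2 - r ^ 2 * T ^ 2)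
            / ((r ^ 2) ^ 2 * T ^ 2 - 1)
          - 2 * α * β * T * (r ^ 2 - 1) ^ 2 / ((r ^ 2) ^ 2 * T ^ 2 - 1)) := by
    rw [← Real.exp_add, ← Real.exp_add]
    congr 1
    simp only [ha, hb, hk]
    rw [div_add_div _ _ (by norm_num) (mul_ne_zero (by norm_num) h1'), div_sub_div_same,
      add_div' _ _ _ (mul_ne_zero (by norm_num) (mul_ne_zero (by norm_num) h1')),
      div_eq_div_iff (mul_ne_zero (by norm_num) (mul_ne_zero (by norm_num) h1')) h2']
    ring
  rw [show R = r ^ 2 from hrr.symm, hC, ← hexp]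
  have hpi : Real.pi ≠ 0 := Real.pi_ne_zero
  have h1 : (1 : ℝ) - k ^ 2 ≠ 0 := ne_of_gt hs2
  have h2'' : (1 : ℝ) - (r ^ 2) ^ 2 * T ^ 2 ≠ 0 := by
    intro h; apply h2'; linear_combination -h
  have e1 : (1 : ℝ) - T ^ 2 * r ^ 4 ≠ 0 := by intro h; apply h1'; linear_combination h
  field_simp
  simp only [hk]
  ring
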